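/- Let S_n = ∑_{i=1}^{n} √F_i denote the initial external perimeter of the Fibonacci–Theodorus spiral formed by the first n triangles, and let C = φ^2 (1 + φ^{−1/2}). Then for every integer n > 1, | S_n − C (√F_n − 5^{−1/4}) | ≤ 1. -/

import Mathlib

open Real Finset

/-- The golden ratio φ = (1+√5)/2. -/
noncomputable def phi : ℝ := (1 + Real.sqrt 5) / 2

/-- The initial external perimeter of the Fibonacci–Theodorus spiral with n triangles,
`S n = ∑_{i=1}^n √(F i)`. -/
noncomputable def S (n : ℕ) : ℝ := ∑ i ∈ Finset.Icc 1 n, Real.sqrt (Nat.fib i)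

/-- The constant `C = φ² (1 + φ^(-1/2))`. -/
noncomputable def C : ℝ := phi ^ 2 * (1 + phi ^ (-(1 : ℝ) / 2))

-- basic numerics
lemma s5_sq : Real.sqrt 5 ^ 2 = 5 := Real.sq_sqrt (by norm_num)
lemma s5_nonneg : 0 ≤ Real.sqrt 5 := Real.sqrt_nonneg 5
lemma s5_lb : 2.236 ≤ Real.sqrt 5 := by nlinarith [s5_sq, s5_nonneg]
lemma s5_ub : Real.sqrt 5 ≤ 2.2361 := by nlinarith [s5_sq, s5_nonneg]
lemma phi_lb : 1.618 ≤ phi := by unfold phi; linarith [s5_lb]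
lemma phi_ub : phi ≤ 1.61805 := by unfold phi; linarith [s5_ub]
lemma phi_pos : 0 < phi := by linarith [phi_lb]
lemma phi_sq : phi ^ 2 = phi + 1 := by unfold phi; nlinarith [s5_sq]

noncomputable def rr : ℝ := Real.sqrt phi
lemma rr_sq : rr ^ 2 = phi := Real.sq_sqrt phi_pos.le
lemma rr_nonneg : 0 ≤ rr := Real.sqrt_nonneg phi
lemma rr_lb : 1.272 ≤ rr := by nlinarith [rr_sq, rr_nonneg, phi_lb]
lemma rr_ub : rr ≤ 1.2721 := by nlinarith [rr_sq, rr_nonneg, phi_ub]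
lemma rr_pos : 0 < rr := by linarith [rr_lb]

noncomputable def ss : ℝ := Real.sqrt (Real.sqrt 5)
lemma ss_sq : ss ^ 2 = Real.sqrt 5 := Real.sq_sqrt s5_nonneg
lemma ss_nonneg : 0 ≤ ss := Real.sqrt_nonneg _
lemma ss_lb : 1.4953 ≤ ss := by nlinarith [ss_sq, ss_nonneg, s5_lb]
lemma ss_ub : ss ≤ 1.4954 := by nlinarith [ss_sq, ss_nonneg, s5_ub]

lemma rpow_half : phi ^ (-(1 : ℝ) / 2) = 1 / rr := by
  rw [neg_div, Real.rpow_neg phi_pos.le, ← Real.sqrt_eq_rpow]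
  simp [rr, one_div]

lemma hC : C = (phi + 1) * (1 + 1 / rr) := by rw [C, rpow_half, phi_sq]

lemma five_pow : (5 : ℝ) ^ (-(1 : ℝ) / 4) = 1 / ss := by
  rw [neg_div, Real.rpow_neg (by norm_num : (0:ℝ) ≤ 5)]
  rw [show (1:ℝ)/4 = (1/2) * (1/2) by norm_num, Real.rpow_mul (by norm_num : (0:ℝ) ≤ 5),
    ← Real.sqrt_eq_rpow, ← Real.sqrt_eq_rpow]
  simp [ss, one_div]

lemma hCr : C * (rr - 1) = rr := by
  have h := rr_sq
  have h2 := phi_sq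
  have hr := rr_pos.ne'
  rw [hC]
  field_simp
  nlinarith [h, h2]

lemma C_pos : 0 < C := by
  rw [hC]
  have h1 := rr_pos
  have h2 := phi_pos
  have : 0 < 1 + 1/rr := by positivity
  nlinarith [h2]

lemma binet : ∀ n : ℕ, phi * (Nat.fib n : ℝ) - (Nat.fib (n + 1) : ℝ) = -(1 - phi) ^ n := by
  intro n
  induction n using Nat.twoStepInduction with
  | zero => simp
  | one => norm_num
  | more n ih1 ih2 =>
      have hfib : (Nat.fib (n + 2) : ℝ) = (Nat.fib (n+1) : ℝ) + (Nat.fib n : ℝ) := by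
        rw [Nat.fib_add_two]; push_cast; ring
      have hfib3 : (Nat.fib (n + 3) : ℝ) = (Nat.fib (n+2) : ℝ) + (Nat.fib (n+1) : ℝ) := by
        rw [show n+3 = (n+1)+2 by ring, Nat.fib_add_two]; push_cast; ring
      have hps := phi_sq
      calc phi * (Nat.fib (n+2) : ℝ) - (Nat.fib (n+3) : ℝ)
          = (phi * (Nat.fib (n+1):ℝ) - (Nat.fib (n+2):ℝ)) + (phi * (Nat.fib n :ℝ) - (Nat.fib (n+1):ℝ)) := by
            rw [hfib3, hfib]; ring
        _ = -(1-phi)^(n+1) + -(1-phi)^n := by rw [ih2, ih1]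
        _ = -(1-phi)^(n+2) := by
            have e1 : (1-phi)^(n+1) = (1-phi)^n * (1-phi) := by ring
            have e2 : (1-phi)^(n+2) = (1-phi)^n * (1-phi)^2 := by ring
            rw [e1, e2]; linear_combination (1-phi)^n * hps

lemma fib_lb : ∀ m : ℕ, phi ^ m ≤ (Nat.fib (m + 2) : ℝ) := by
  intro m
  induction m using Nat.twoStepInduction with
  | zero => simp
  | one => simpa using phi_ub.trans (by norm_num)
  | more n ih1 ih2 =>
      have hfib : (Nat.fib (n + 4) : ℝ) = (Nat.fib (n+3) : ℝ) + (Nat.fib (n+2) : ℝ) := by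
        rw [show n+4 = (n+2)+2 by ring, Nat.fib_add_two]; push_cast; ring
      have hps := phi_sq
      have hp := pow_nonneg phi_pos.le n
      calc phi ^ (n+2) = (phi + 1) * phi ^ n := by rw [← phi_sq]; ring
        _ = phi * phi ^ n + phi ^ n := by ring
        _ ≤ (Nat.fib (n+3) : ℝ) + (Nat.fib (n+2) : ℝ) := by
            have := pow_succ phi n
            nlinarith [ih1, ih2, phi_pos]
        _ = (Nat.fib (n + 4) : ℝ) := hfib.symm

noncomputable def ww : ℝ := 1 / rr ^ 3
noncomputable def cc : ℝ := (3 * phi + 2) / 2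
noncomputable def Dd (n : ℕ) : ℝ :=
  Real.sqrt (Nat.fib (n+1)) - C * (Real.sqrt (Nat.fib (n+1)) - Real.sqrt (Nat.fib n))
noncomputable def Ef (n : ℕ) : ℝ := S n - C * (Real.sqrt (Nat.fib n) - (5:ℝ) ^ (-(1:ℝ)/4))

lemma ww_pos : 0 < ww := div_pos one_pos (pow_pos rr_pos 3)
lemma cc_pos : 0 < cc := by rw [cc]; nlinarith [phi_pos]

lemma Ef_succ (n : ℕ) : Ef (n+1) = Ef n + Dd n := by
  unfold Ef Dd S
  rw [Finset.sum_Icc_succ_top (by omega : 1 ≤ n+1)]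
  ring

lemma phi_m1 : (phi - 1) * rr ^ 2 = 1 := by rw [rr_sq]; nlinarith [phi_sq]

lemma key : C * rr = (phi + 1) * (rr + 1) := by
  rw [hC]; field_simp [rr_pos.ne']

lemma Dd_mul (n : ℕ) :
    Dd n * ((rr * Real.sqrt (Nat.fib n) + Real.sqrt (Nat.fib (n+1))) * rr)
      = -C * (1 - phi) ^ n := by
  set a := Real.sqrt (Nat.fib n)
  set b := Real.sqrt (Nat.fib (n+1))
  have h1 : a ^ 2 = (Nat.fib n : ℝ) := Real.sq_sqrt (by positivity)
  have h2 : b ^ 2 = (Nat.fib (n+1) : ℝ) := Real.sq_sqrt (by positivity)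
  have e1 : rr * Dd n = C * (rr * a - b) := by
    unfold Dd; linear_combination (-b) * hCr
  have e2 : (rr * a - b) * (rr * a + b) = -(1 - phi) ^ n := by
    linear_combination a^2 * rr_sq + phi * h1 - h2 + binet n
  calc Dd n * ((rr * a + b) * rr) = (rr * Dd n) * (rr * a + b) := by ring
    _ = (C * (rr * a - b)) * (rr * a + b) := by rw [e1]
    _ = C * ((rr * a - b) * (rr * a + b)) := by ring
    _ = C * (-(1 - phi) ^ n) := by rw [e2]
    _ = -C * (1 - phi) ^ n := by ring

lemma A_lb (m : ℕ) :
    (rr + 1) * rr ^ m ≤ rr * Real.sqrt (Nat.fib (m+2)) + Real.sqrt (Nat.fib (m+3)) := by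
  have h1 : rr ^ m ≤ Real.sqrt (Nat.fib (m+2)) := by
    rw [Real.le_sqrt (pow_nonneg rr_nonneg m) (by positivity)]
    calc (rr ^ m) ^ 2 = (rr ^ 2) ^ m := by ring
      _ = phi ^ m := by rw [rr_sq]
      _ ≤ (Nat.fib (m+2) : ℝ) := fib_lb m
  have h2 : Real.sqrt (Nat.fib (m+2)) ≤ Real.sqrt (Nat.fib (m+3)) := by
    apply Real.sqrt_le_sqrt
    exact_mod_cast Nat.cast_le.mpr (Nat.fib_mono (by omega))
  nlinarith [rr_pos, h1, h2, pow_nonneg rr_nonneg m]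

lemma hwr : phi - 1 = ww * rr := by
  rw [ww]
  rw [div_mul_eq_mul_div, eq_div_iff (pow_ne_zero 3 rr_pos.ne')]
  linear_combination rr * phi_m1

lemma bound_id : ∀ m : ℕ, C * (phi - 1) ^ (m+2)
    = phi ^ 2 * ww ^ (m+2) * ((rr + 1) * rr ^ m) * rr := by
  intro m
  induction m with
  | zero =>
      rw [hwr]
      have hr : rr ≠ 0 := rr_pos.ne'
      linear_combination (ww^2*rr) * key - (ww^2*rr*(rr+1)) * phi_sq
  | succ m ih =>
      calc C * (phi - 1) ^ (m+3) = (C * (phi - 1) ^ (m+2)) * (phi - 1) := by ring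
        _ = (phi ^ 2 * ww ^ (m+2) * ((rr + 1) * rr ^ m) * rr) * (ww * rr) := by
            rw [ih, hwr]
        _ = phi ^ 2 * ww ^ (m+3) * ((rr + 1) * rr ^ (m+1)) * rr := by ring

lemma A_pos (m : ℕ) :
    0 < (rr * Real.sqrt (Nat.fib (m+2)) + Real.sqrt (Nat.fib (m+3))) * rr := by
  have h := A_lb m
  have h2 : 0 < (rr + 1) * rr ^ m := by
    have := rr_pos
    positivity
  nlinarith [rr_pos]

lemma Dd_div (m : ℕ) : Dd (m+2) = (-C * (1 - phi) ^ (m+2)) /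
    ((rr * Real.sqrt (Nat.fib (m+2)) + Real.sqrt (Nat.fib (m+3))) * rr) := by
  rw [eq_div_iff (A_pos m).ne']
  exact Dd_mul (m+2)

lemma Dd_abs (m : ℕ) : |Dd (m+2)| ≤ phi ^ 2 * ww ^ (m+2) := by
  set A := (rr * Real.sqrt (Nat.fib (m+2)) + Real.sqrt (Nat.fib (m+3))) * rr with hA
  have hApos : 0 < A := A_pos m
  rw [Dd_div m, abs_div, abs_of_pos hApos, div_le_iff₀ hApos]
  have habs : |(-C : ℝ) * (1 - phi) ^ (m+2)| = C * (phi - 1) ^ (m+2) := by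
    rw [abs_mul, abs_neg, abs_of_pos C_pos, abs_pow]
    congr 1
    rw [abs_of_nonpos (by linarith [phi_lb] : (1:ℝ) - phi ≤ 0)]
    ring
  rw [habs, bound_id m]
  have h1 : (rr + 1) * rr ^ m * rr ≤ A := by
    rw [hA]
    nlinarith [A_lb m, rr_pos]
  have h2 : 0 ≤ phi ^ 2 * ww ^ (m+2) := mul_nonneg (sq_nonneg phi) (pow_nonneg ww_pos.le _)
  nlinarith [h2, h1]

lemma Dd_nonpos (m : ℕ) (h : Even (m+2)) : Dd (m+2) ≤ 0 := by
  rw [Dd_div m]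
  apply div_nonpos_of_nonpos_of_nonneg _ (A_pos m).le
  have : (0:ℝ) ≤ (1 - phi) ^ (m+2) := h.pow_nonneg _
  nlinarith [C_pos]

lemma Dd_nonneg (m : ℕ) (h : Odd (m+2)) : 0 ≤ Dd (m+2) := by
  rw [Dd_div m]
  apply div_nonneg _ (A_pos m).le
  have : (1 - phi) ^ (m+2) ≤ 0 := h.pow_nonpos (by linarith [phi_lb])
  nlinarith [C_pos]

lemma rr6 : rr ^ 6 = 2 * phi + 1 := by
  linear_combination (rr^4 + rr^2*phi + phi^2) * rr_sq + (phi + 1) * phi_sq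

lemma ww2 : ww ^ 2 = 1 / (2 * phi + 1) := by
  rw [ww, div_pow, one_pow, ← pow_mul]
  norm_num [rr6]

lemma cc_id : cc - phi ^ 2 = cc * ww ^ 2 := by
  rw [cc, ww2]
  have h : (2 * phi + 1) ≠ 0 := by nlinarith [phi_pos]
  rw [mul_one_div, eq_div_iff h]
  linear_combination (-2*phi) * phi_sq

lemma ww_ub : ww ≤ 0.486 := by
  rw [ww, div_le_iff₀ (pow_pos rr_pos 3)]
  have h3 : (1.272:ℝ)^3 ≤ rr^3 := pow_le_pow_left₀ (by norm_num) rr_lb 3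
  nlinarith [h3]

lemma ww_nonneg : 0 ≤ ww := ww_pos.le

lemma inv_rr_lb : 0.786 ≤ 1 / rr := by
  rw [le_div_iff₀ rr_pos]; nlinarith [rr_ub]

lemma inv_rr_ub : 1 / rr ≤ 0.7862 := by
  rw [div_le_iff₀ rr_pos]; nlinarith [rr_lb]

lemma ss_pos : 0 < ss := by linarith [ss_lb]

lemma inv_ss_lb : 0.6687 ≤ 1 / ss := by
  rw [le_div_iff₀ ss_pos]; nlinarith [ss_ub]

lemma inv_ss_ub : 1 / ss ≤ 0.66877 := by
  rw [div_le_iff₀ ss_pos]; nlinarith [ss_lb]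

lemma C_lb : 4.6757 ≤ C := by
  rw [hC]
  nlinarith [phi_lb, inv_rr_lb, mul_nonneg (by linarith [phi_lb] : (0:ℝ) ≤ phi + 1 - 2.618) (by linarith [inv_rr_lb] : (0:ℝ) ≤ 1 + 1/rr - 1.786)]

lemma C_ub : C ≤ 4.6764 := by
  rw [hC]
  nlinarith [phi_ub, inv_rr_ub, phi_lb, inv_rr_lb, mul_nonneg (by linarith [phi_ub] : (0:ℝ) ≤ 2.61805 - (phi + 1)) (by linarith [inv_rr_ub] : (0:ℝ) ≤ 1.7862 - (1 + 1/rr))]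

lemma Ef_two : Ef 2 = 2 - C * (1 - 1/ss) := by
  rw [Ef, five_pow, S]
  rw [show Finset.Icc 1 2 = {1, 2} from rfl]
  rw [Finset.sum_pair (by norm_num : (1:ℕ) ≠ 2)]
  norm_num [Nat.fib_one, Nat.fib_two]

lemma cw3_ub : cc * ww ^ 3 ≤ 0.3935 := by
  rw [cc]
  nlinarith [ww_ub, ww_nonneg, phi_ub, phi_lb, pow_le_pow_left₀ ww_nonneg ww_ub 3]

lemma cw2_ub : cc * ww ^ 2 ≤ 0.8095 := by
  rw [cc]
  nlinarith [ww_ub, ww_nonneg, phi_ub, phi_lb, pow_le_pow_left₀ ww_nonneg ww_ub 2]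

lemma base_upper : Ef 2 ≤ 19/20 - cc * ww ^ 3 := by
  rw [Ef_two]
  have h1 : 1.5486 ≤ C * (1 - 1/ss) := by
    nlinarith [C_lb, inv_ss_ub, C_pos, mul_nonneg (by linarith [C_lb] : (0:ℝ) ≤ C - 4.6757) (by linarith [inv_ss_ub] : (0:ℝ) ≤ 1 - 1/ss - 0.33123)]
  linarith [cw3_ub, h1]

lemma base_lower : -(19/20) + cc * ww ^ 2 ≤ Ef 2 := by
  rw [Ef_two]
  have h1 : C * (1 - 1/ss) ≤ 1.5494 := by
    have P : (0:ℝ) ≤ (4.6764 - C) * (1/ss - 0.6687) :=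
      mul_nonneg (by linarith [C_ub]) (by linarith [inv_ss_lb])
    nlinarith [P, C_ub, inv_ss_lb, C_lb, inv_ss_ub]
  linarith [cw2_ub, h1]

lemma invariant : ∀ m : ℕ,
    ((Even (m+2) → Ef (m+2) ≤ 19/20 - cc * ww^(m+3) ∧ -(19/20) + cc * ww^(m+2) ≤ Ef (m+2)) ∧
     (¬ Even (m+2) → Ef (m+2) ≤ 19/20 - cc * ww^(m+2) ∧ -(19/20) + cc * ww^(m+3) ≤ Ef (m+2))) := by
  intro m
  induction m with
  | zero =>
      constructor
      · intro _
        exact ⟨base_upper, base_lower⟩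
      · intro h
        exact absurd (by decide : Even 2) h
  | succ m ih =>
      simp only [show m+1+2 = m+3 from rfl, show m+1+3 = m+4 from rfl] at *
      have hEs : Ef (m+3) = Ef (m+2) + Dd (m+2) := Ef_succ (m+2)
      have habs := abs_le.mp (Dd_abs m)
      have hkey : cc * ww^(m+2) - phi^2 * ww^(m+2) = cc * ww^(m+4) := by
        linear_combination ww^(m+2) * cc_id
      rcases Nat.even_or_odd (m+2) with he | ho
      · have h1 := ih.1 he
        have hd0 := Dd_nonpos m he
        have hne3 : ¬ Even (m+3) := by
          rw [show m+3 = (m+2)+1 from rfl, Nat.even_add_one]; simpa using he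
        refine ⟨fun h3 => absurd h3 hne3, fun _ => ⟨?_, ?_⟩⟩
        · linarith [h1.1]
        · linarith [h1.2, habs.1, hkey]
      · have he' : ¬ Even (m+2) := Nat.not_even_iff_odd.mpr ho
        have h1 := ih.2 he'
        have hd0 := Dd_nonneg m ho
        have he3 : Even (m+3) := by
          rw [show m+3 = (m+2)+1 from rfl, Nat.even_add_one]; simpa using he'
        refine ⟨fun _ => ⟨?_, ?_⟩, fun h3 => absurd he3 h3⟩
        · linarith [h1.1, habs.2, hkey]
        · linarith [h1.2]


theorem perimeter_approx :
    ∀ n : ℕ, 1 < n →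
      |S n - C * (Real.sqrt (Nat.fib n) - (5 : ℝ) ^ (-(1 : ℝ) / 4))| ≤ 1 := by
  intro n hn
  obtain ⟨m, rfl⟩ : ∃ m, n = m + 2 := ⟨n - 2, by omega⟩
  have h := invariant m
  have h0 : 0 ≤ cc * ww ^ (m+2) := mul_nonneg cc_pos.le (pow_nonneg ww_nonneg _)
  have h1 : 0 ≤ cc * ww ^ (m+3) := mul_nonneg cc_pos.le (pow_nonneg ww_nonneg _)
  have habs : |Ef (m+2)| ≤ 1 := by
    rcases Nat.even_or_odd (m+2) with he | ho
    · have hh := h.1 he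
      rw [abs_le]
      constructor <;> linarith [hh.1, hh.2]
    · have hh := h.2 (Nat.not_even_iff_odd.mpr ho)
      rw [abs_le]
      constructor <;> linarith [hh.1, hh.2]
  simpa only [Ef] using habs
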